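/- Let R be a commutative ring of characteristic 2, p a positive integer, and Q_0, Q_1, Q_2, A_0, A_1, A_2 arbitrary p×p matrices over R. Let M be the 3p×6p block matrix with block rows (Q_0 Q_1 Q_2 | A_0 A_1 A_2), (Q_2 Q_0 Q_1 | A_2 A_0 A_1), (Q_1 Q_2 Q_0 | A_1 A_2 A_0), and let C be the code generated by the rows of M, i.e., the R-submodule of R^{6p} spanned by the rows of M. Then C is self-orthogonal (every two codewords of C have Euclidean inner product 0) if and only if Σ_{i=0}^{2} A_i A_i^T = Σ_{i=0}^{2} Q_i Q_i^T and Σ_{i=0}^{2} A_i A_{[i+2]_3}^T = Σ_{i=0}^{2} Q_i Q_{[i+2]_3}^T. -/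

import Mathlib

open Matrix

/-- The `3×3` block circulant matrix `CIRC(B 0, B 1, B 2)` whose block rows are
`(B 0, B 1, B 2)`, `(B 2, B 0, B 1)`, `(B 1, B 2, B 0)`. -/
def blockCirc {R n : Type*} (B : ZMod 3 → Matrix n n R) :
    Matrix (ZMod 3 × n) (ZMod 3 × n) R :=
  Matrix.of fun ix jy => B (jy.1 - ix.1) ix.2 jy.2

/-- The `3p × 6p` block matrix with block rows `(Q 0, Q 1, Q 2 | A 0, A 1, A 2)`,
`(Q 2, Q 0, Q 1 | A 2, A 0, A 1)`, `(Q 1, Q 2, Q 0 | A 1, A 2, A 0)`. -/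
def Mblk {R n : Type*} (Q A : ZMod 3 → Matrix n n R) :
    Matrix (ZMod 3 × n) ((ZMod 3 × n) ⊕ (ZMod 3 × n)) R :=
  Matrix.fromCols (blockCirc Q) (blockCirc A)

section Aux
variable {R : Type*} [CommRing R] {p : ℕ} (Q A : ZMod 3 → Matrix (Fin p) (Fin p) R)

/-- Gram-type sums. -/
def Fd (d : ZMod 3) : Matrix (Fin p) (Fin p) R :=
  (∑ k : ZMod 3, Q k * (Q (k + d))ᵀ) + ∑ k : ZMod 3, A k * (A (k + d))ᵀ

lemma circ_dot (B : ZMod 3 → Matrix (Fin p) (Fin p) R) (ix jy : ZMod 3 × Fin p) :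
    dotProduct (blockCirc B ix) (blockCirc B jy)
      = (∑ k : ZMod 3, B k * (B (k + (ix.1 - jy.1)))ᵀ) ix.2 jy.2 := by
  rw [dotProduct, Fintype.sum_prod_type, Matrix.sum_apply]
  refine Fintype.sum_equiv (Equiv.subRight ix.1) _ _ fun c => ?_
  simp only [blockCirc, Matrix.of_apply, Matrix.mul_apply, Matrix.transpose_apply,
    Equiv.subRight_apply]
  congr 2
  ring

lemma dot_rows (ix jy : ZMod 3 × Fin p) :
    dotProduct (Mblk Q A ix) (Mblk Q A jy) = Fd Q A (ix.1 - jy.1) ix.2 jy.2 := by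
  rw [dotProduct, Fintype.sum_sum_type]
  simp only [Mblk, Matrix.fromCols_apply_inl, Matrix.fromCols_apply_inr]
  rw [Fd, Matrix.add_apply, ← circ_dot Q ix jy, ← circ_dot A ix jy]
  rfl

lemma Fd_transpose (d : ZMod 3) : (Fd Q A d)ᵀ = Fd Q A (-d) := by
  rw [Fd, Fd, Matrix.transpose_add, Matrix.transpose_sum, Matrix.transpose_sum]
  congr 1
  · refine Fintype.sum_equiv (Equiv.addRight d) _ _ fun k => ?_
    simp only [Matrix.transpose_mul, Matrix.transpose_transpose, Equiv.coe_addRight]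
    congr 2
    ring
  · refine Fintype.sum_equiv (Equiv.addRight d) _ _ fun k => ?_
    simp only [Matrix.transpose_mul, Matrix.transpose_transpose, Equiv.coe_addRight]
    congr 2
    ring

end Aux

theorem stmt5 {R : Type*} [CommRing R] [CharP R 2] (p : ℕ) (hp : 0 < p)
    (Q A : ZMod 3 → Matrix (Fin p) (Fin p) R) :
    (∀ x ∈ Submodule.span R (Set.range fun i => Mblk Q A i),
      ∀ y ∈ Submodule.span R (Set.range fun i => Mblk Q A i),
        dotProduct x y = 0) ↔
      (∑ i : ZMod 3, A i * (A i)ᵀ = ∑ i : ZMod 3, Q i * (Q i)ᵀ ∧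
        ∑ i : ZMod 3, A i * (A (i + 2))ᵀ = ∑ i : ZMod 3, Q i * (Q (i + 2))ᵀ) := by
  have hneg : ∀ X : Matrix (Fin p) (Fin p) R, -X = X := by
    intro X; ext i j
    simp [Matrix.neg_apply, CharTwo.neg_eq]
  have key : (∀ x ∈ Submodule.span R (Set.range fun i => Mblk Q A i),
      ∀ y ∈ Submodule.span R (Set.range fun i => Mblk Q A i),
        dotProduct x y = 0) ↔ ∀ i j, dotProduct (Mblk Q A i) (Mblk Q A j) = 0 := by
    constructor
    · intro h i j
      exact h _ (Submodule.subset_span ⟨i, rfl⟩) _ (Submodule.subset_span ⟨j, rfl⟩)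
    · intro h x hx y hy
      have H1 : ∀ v ∈ (Set.range fun i => Mblk Q A i), dotProduct v y = 0 := by
        rintro _ ⟨i, rfl⟩
        refine Submodule.span_induction ?_ ?_ ?_ ?_ hy
        · rintro _ ⟨j, rfl⟩; exact h i j
        · exact dotProduct_zero _
        · intro a b _ _ ha hb; rw [dotProduct_add, ha, hb, add_zero]
        · intro r a _ ha; rw [dotProduct_smul, ha, smul_zero]
      refine Submodule.span_induction H1 ?_ ?_ ?_ hx
      · exact zero_dotProduct _
      · intro a b _ _ ha hb; rw [add_dotProduct, ha, hb, add_zero]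
      · intro r a _ ha; rw [smul_dotProduct, ha, smul_zero]
  have key2 : (∀ i j, dotProduct (Mblk Q A i) (Mblk Q A j) = 0)
      ↔ ∀ d, Fd Q A d = 0 := by
    constructor
    · intro h d
      ext x y
      have := h (d, x) (0, y)
      rwa [dot_rows, sub_zero] at this
    · intro h i j
      rw [dot_rows, h]
      rfl
  have keyd : (∀ d : ZMod 3, Fd Q A d = 0) ↔ (Fd Q A 0 = 0 ∧ Fd Q A 2 = 0) := by
    constructor
    · intro h; exact ⟨h 0, h 2⟩
    · rintro ⟨h0, h2⟩ d
      have h1 : Fd Q A 1 = 0 := by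
        have := Fd_transpose Q A 2
        rw [h2] at this
        have h21 : -(2 : ZMod 3) = 1 := by decide
        rw [h21] at this
        simpa using this.symm
      fin_cases d
      · exact h0
      · exact h1
      · exact h2
  have hchar : ∀ a b : Matrix (Fin p) (Fin p) R, a + b = 0 ↔ b = a := by
    intro a b
    rw [add_eq_zero_iff_eq_neg, hneg, eq_comm]
  rw [key, key2, keyd, Fd, Fd, hchar, hchar]
  simp only [add_zero]
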